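/- For a nonconvex closed subset X of ℝ^N, metric projection onto the closed convex hull of the inner boundary, cconv(ρX), maps X into core(X) = cconv(ρX) ∩ X. In particular, every point of X has a unique closest point in core(X). -/

import Mathlib

open scoped RealInnerProductSpace

def AdjIn {E : Type*} [MetricSpace E] (X : Set E) (x y : E) : Prop :=
  x ∈ X ∧ y ∈ X ∧ x ≠ y ∧
    ¬ ∃ p ∈ X, p ≠ x ∧ p ≠ y ∧ dist x p + dist p y = dist x y

def innerBdry {E : Type*} [MetricSpace E] (X : Set E) : Set E :=
  {x | ∃ y, AdjIn X x y}

section Gap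
variable {E : Type*} [NormedAddCommGroup E] [InnerProductSpace ℝ E]

example : StrictConvexSpace ℝ E := inferInstance

lemma gap_lemma {X : Set E} (hX : IsClosed X) {a b t : E}
    (ha : a ∈ X) (hb : b ∈ X) (ht : t ∈ segment ℝ a b) (htX : t ∉ X) :
    ∃ e₁ e₂ : E, e₁ ∈ innerBdry X ∧ e₂ ∈ innerBdry X ∧ t ∈ segment ℝ e₁ e₂ := by
  rw [segment_eq_image'] at ht
  obtain ⟨s₀, hs₀, hts⟩ := ht
  have hab : b - a ≠ 0 := by
    intro h
    apply htX
    have : t = a := by rw [← hts, h]; simp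
    rwa [this]
  set φ : ℝ → E := fun s => a + s • (b - a) with hφ
  have hφc : Continuous φ := by fun_prop
  set S : Set ℝ := Set.Icc (0:ℝ) 1 ∩ φ ⁻¹' X with hS
  have hScl : IsClosed S := isClosed_Icc.inter (hX.preimage hφc)
  have hScpt : IsCompact S := isCompact_Icc.of_isClosed_subset hScl Set.inter_subset_left
  set S₁ : Set ℝ := S ∩ Set.Icc 0 s₀ with hS₁
  set S₂ : Set ℝ := S ∩ Set.Icc s₀ 1 with hS₂
  have h0 : (0:ℝ) ∈ S₁ := by
    refine ⟨⟨⟨le_refl 0, zero_le_one⟩, ?_⟩, ⟨le_refl 0, hs₀.1⟩⟩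
    show φ 0 ∈ X
    simp [hφ, ha]
  have h1 : (1:ℝ) ∈ S₂ := by
    refine ⟨⟨⟨zero_le_one, le_refl 1⟩, ?_⟩, ⟨hs₀.2, le_refl 1⟩⟩
    show φ 1 ∈ X
    simp [hφ, hb]
  have hS₁cpt : IsCompact S₁ := hScpt.inter_right isClosed_Icc
  have hS₂cpt : IsCompact S₂ := hScpt.inter_right isClosed_Icc
  set s₁ := sSup S₁ with hs₁def
  set s₂ := sInf S₂ with hs₂def
  have hs₁mem : s₁ ∈ S₁ := hS₁cpt.sSup_mem ⟨0, h0⟩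
  have hs₂mem : s₂ ∈ S₂ := hS₂cpt.sInf_mem ⟨1, h1⟩
  have hs₁le : s₁ ≤ s₀ := hs₁mem.2.2
  have hs₂ge : s₀ ≤ s₂ := hs₂mem.2.1
  have hs₁0 : 0 ≤ s₁ := hs₁mem.2.1
  have hs₂1 : s₂ ≤ 1 := hs₂mem.2.2
  have hφs₀ : φ s₀ ∉ X := fun h => htX (hts ▸ h)
  have hs₁lt : s₁ < s₀ := by
    rcases lt_or_eq_of_le hs₁le with h | h
    · exact h
    · exact absurd (h ▸ hs₁mem.1.2) hφs₀
  have hs₂gt : s₀ < s₂ := by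
    rcases lt_or_eq_of_le hs₂ge with h | h
    · exact h
    · exact absurd (h ▸ hs₂mem.1.2) hφs₀
  have hgap : ∀ s : ℝ, s₁ < s → s < s₂ → φ s ∉ X := by
    intro s hl hr hsX
    have hsIcc : s ∈ Set.Icc (0:ℝ) 1 := ⟨le_trans hs₁0 hl.le, le_trans hr.le hs₂1⟩
    rcases le_total s s₀ with h | h
    · have hmem : s ∈ S₁ := ⟨⟨hsIcc, hsX⟩, ⟨hsIcc.1, h⟩⟩
      have := le_csSup hS₁cpt.bddAbove hmem
      rw [← hs₁def] at this
      linarith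
    · have hmem : s ∈ S₂ := ⟨⟨hsIcc, hsX⟩, ⟨h, hsIcc.2⟩⟩
      have := csInf_le hS₂cpt.bddBelow hmem
      rw [← hs₂def] at this
      linarith
  have hs₁₂ : s₁ < s₂ := lt_trans hs₁lt hs₂gt
  set e₁ := φ s₁ with he₁def
  set e₂ := φ s₂ with he₂def
  have he₁X : e₁ ∈ X := hs₁mem.1.2
  have he₂X : e₂ ∈ X := hs₂mem.1.2
  have hediff : e₂ - e₁ = (s₂ - s₁) • (b - a) := by
    rw [he₁def, he₂def, hφ]
    show a + s₂ • (b - a) - (a + s₁ • (b - a)) = (s₂ - s₁) • (b - a)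
    module
  have hene : e₁ ≠ e₂ := by
    intro h
    have : (s₂ - s₁) • (b - a) = 0 := by rw [← hediff, h]; simp
    rcases smul_eq_zero.mp this with h' | h'
    · have : s₂ = s₁ := by linarith [sub_eq_zero.mp h']
      linarith
    · exact hab h'
  have hadj : AdjIn X e₁ e₂ := by
    refine ⟨he₁X, he₂X, hene, ?_⟩
    rintro ⟨p, hp, hp1, hp2, hd⟩
    have hw : Wbtw ℝ e₁ p e₂ := dist_add_dist_eq_iff.mp hd
    have hseg : p ∈ segment ℝ e₁ e₂ := mem_segment_iff_wbtw.mpr hw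
    rw [segment_eq_image'] at hseg
    obtain ⟨σ, hσ, hpe⟩ := hseg
    have hpφ : p = φ (s₁ + σ * (s₂ - s₁)) := by
      rw [← hpe, hediff, he₁def, hφ]
      show a + s₁ • (b - a) + σ • (s₂ - s₁) • (b - a) = a + (s₁ + σ * (s₂ - s₁)) • (b - a)
      module
    have hσpos : 0 < σ := by
      rcases lt_or_eq_of_le hσ.1 with h | h
      · exact h
      · exfalso; apply hp1; rw [hpφ, ← h]; simp [he₁def]
    have hσlt : σ < 1 := by
      rcases lt_or_eq_of_le hσ.2 with h | h
      · exact h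
      · exfalso; apply hp2; rw [hpφ, h]
        show φ (s₁ + 1 * (s₂ - s₁)) = e₂
        rw [he₂def]; ring_nf
    have h1 : s₁ < s₁ + σ * (s₂ - s₁) := by nlinarith
    have h2 : s₁ + σ * (s₂ - s₁) < s₂ := by nlinarith
    exact hgap _ h1 h2 (hpφ ▸ hp)
  refine ⟨e₁, e₂, ⟨e₂, hadj⟩, ⟨e₁, ?_⟩, ?_⟩
  · obtain ⟨hx', hy', hne', hnb'⟩ := hadj
    refine ⟨hy', hx', hne'.symm, ?_⟩
    rintro ⟨p, hp, hpa, hpb, hd⟩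
    exact hnb' ⟨p, hp, hpb, hpa, by rw [dist_comm e₂ p, dist_comm p e₁, dist_comm e₂ e₁] at hd; linarith⟩
  · rw [segment_eq_image']
    refine ⟨(s₀ - s₁) / (s₂ - s₁), ⟨div_nonneg (by linarith) (by linarith), ?_⟩, ?_⟩
    · rw [div_le_one (by linarith)]; linarith
    · rw [hediff, ← hts, he₁def, hφ]
      show a + s₁ • (b - a) + ((s₀ - s₁) / (s₂ - s₁)) • (s₂ - s₁) • (b - a) = a + s₀ • (b - a)
      rw [smul_smul, div_mul_cancel₀ _ (by linarith : s₂ - s₁ ≠ 0)]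
      module
end Gap

section Main
variable {E : Type*} [NormedAddCommGroup E] [InnerProductSpace ℝ E]

lemma bracket_lemma {X : Set E} (hX : IsClosed X) {a b t : E} (ha : a ∈ X) (hb : b ∈ X)
    (ht : t ∈ segment ℝ a b) : t ∈ X ∨ t ∈ convexHull ℝ (innerBdry X) := by
  by_cases htX : t ∈ X
  · exact Or.inl htX
  · obtain ⟨e₁, e₂, he₁, he₂, hseg⟩ := gap_lemma hX ha hb ht htX
    exact Or.inr (segment_subset_convexHull he₁ he₂ hseg)

lemma inner_param (v x m q : E) (s : ℝ) :
    ⟪v, (x + s • (q - x)) - m⟫ = (1 - s) * ⟪v, x - m⟫ + s * ⟪v, q - m⟫ := by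
  have h : (x + s • (q - x)) - m = (1 - s) • (x - m) + s • (q - m) := by module
  rw [h, inner_add_right, real_inner_smul_right, real_inner_smul_right]

lemma claimH {X : Set E} (hX : IsClosed X) {x m : E} (hx : x ∈ X)
    (hle : ∀ q ∈ convexHull ℝ (innerBdry X), ⟪x - m, q - m⟫ ≤ 0) :
    ∀ q ∈ convexHull ℝ (innerBdry X), ∀ t ∈ segment ℝ x q,
      0 < ⟪x - m, t - m⟫ → t ∈ X := by
  set v := x - m with hvdef
  set G : Set E := {q | ⟪v, q - m⟫ ≤ 0 ∧
    ∀ t ∈ segment ℝ x q, 0 < ⟪v, t - m⟫ → t ∈ X} with hGdef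
  suffices h : convexHull ℝ (innerBdry X) ⊆ G by
    exact fun q hq => (h hq).2
  apply convexHull_min
  · intro r hr
    obtain ⟨y, hadj⟩ := hr
    have hrX : r ∈ X := hadj.1
    constructor
    · exact hle r (subset_convexHull ℝ _ ⟨y, hadj⟩)
    · intro t ht hgt
      rcases bracket_lemma hX hx hrX ht with h | h
      · exact h
      · exact absurd (hle t h) (by linarith)
  · -- convexity of G
    intro q₁ hq₁ q₂ hq₂ c₁ c₂ hc₁ hc₂ hsum
    have hgq₁ : ⟪v, q₁ - m⟫ ≤ 0 := hq₁.1
    have hgq₂ : ⟪v, q₂ - m⟫ ≤ 0 := hq₂.1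
    set q := c₁ • q₁ + c₂ • q₂ with hqdef
    have hqm : q - m = c₁ • (q₁ - m) + c₂ • (q₂ - m) := by
      rw [hqdef]
      match_scalars <;> linarith
    have hgq : ⟪v, q - m⟫ = c₁ * ⟪v, q₁ - m⟫ + c₂ * ⟪v, q₂ - m⟫ := by
      rw [hqm, inner_add_right, real_inner_smul_right, real_inner_smul_right]
    have hgqle : ⟪v, q - m⟫ ≤ 0 := by
      rw [hgq]
      have := mul_nonneg hc₁ (neg_nonneg.mpr hgq₁)
      have := mul_nonneg hc₂ (neg_nonneg.mpr hgq₂)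
      nlinarith
    refine ⟨hgqle, ?_⟩
    intro t ht hgt
    rw [segment_eq_image'] at ht
    obtain ⟨s, hs, hts⟩ := ht
    rcases eq_or_lt_of_le hs.1 with hs0 | hs0
    · have : t = x := by rw [← hts, ← hs0]; simp
      rwa [this]
    set D2 := ⟪v, x - m⟫ with hD2def
    have hD2 : 0 < D2 := by
      rcases eq_or_ne v 0 with h | h
      · rw [h] at hgt; simp at hgt
      · have he : D2 = ‖v‖ ^ 2 := by rw [hD2def, ← hvdef]; exact real_inner_self_eq_norm_sq v
        have hn : 0 < ‖v‖ := norm_pos_iff.mpr h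
        rw [he]
        positivity
    have hgt_id : ⟪v, t - m⟫ = (1 - s) * D2 + s * ⟪v, q - m⟫ := by
      rw [← hts, inner_param]
    have hgtD2 : ⟪v, t - m⟫ < D2 := by nlinarith [hs.2]
    have hd₁ : 0 < D2 - ⟪v, q₁ - m⟫ := by linarith
    have hd₂ : 0 < D2 - ⟪v, q₂ - m⟫ := by linarith
    set σ₁ := (D2 - ⟪v, t - m⟫) / (D2 - ⟪v, q₁ - m⟫) with hσ₁def
    set σ₂ := (D2 - ⟪v, t - m⟫) / (D2 - ⟪v, q₂ - m⟫) with hσ₂def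
    have hσ₁mem : σ₁ ∈ Set.Icc (0:ℝ) 1 :=
      ⟨div_nonneg (by linarith) hd₁.le, (div_le_one hd₁).mpr (by linarith)⟩
    have hσ₂mem : σ₂ ∈ Set.Icc (0:ℝ) 1 :=
      ⟨div_nonneg (by linarith) hd₂.le, (div_le_one hd₂).mpr (by linarith)⟩
    set α := x + σ₁ • (q₁ - x) with hαdef
    set β := x + σ₂ • (q₂ - x) with hβdef
    have hσ₁mul : σ₁ * (D2 - ⟪v, q₁ - m⟫) = D2 - ⟪v, t - m⟫ :=
      div_mul_cancel₀ _ (ne_of_gt hd₁)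
    have hσ₂mul : σ₂ * (D2 - ⟪v, q₂ - m⟫) = D2 - ⟪v, t - m⟫ :=
      div_mul_cancel₀ _ (ne_of_gt hd₂)
    have hgα : ⟪v, α - m⟫ = ⟪v, t - m⟫ := by
      rw [hαdef, inner_param]
      linear_combination -hσ₁mul
    have hgβ : ⟪v, β - m⟫ = ⟪v, t - m⟫ := by
      rw [hβdef, inner_param]
      linear_combination -hσ₂mul
    have hαX : α ∈ X := by
      refine hq₁.2 α ?_ (by rw [hgα]; exact hgt)
      rw [segment_eq_image']
      exact ⟨σ₁, hσ₁mem, rfl⟩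
    have hβX : β ∈ X := by
      refine hq₂.2 β ?_ (by rw [hgβ]; exact hgt)
      rw [segment_eq_image']
      exact ⟨σ₂, hσ₂mem, rfl⟩
    have hDgt : 0 < D2 - ⟪v, t - m⟫ := by linarith
    set w₁ := s * c₁ * (D2 - ⟪v, q₁ - m⟫) / (D2 - ⟪v, t - m⟫) with hw₁def
    set w₂ := s * c₂ * (D2 - ⟪v, q₂ - m⟫) / (D2 - ⟪v, t - m⟫) with hw₂def
    have hw₁0 : 0 ≤ w₁ := by
      apply div_nonneg _ hDgt.le
      have : 0 ≤ s * c₁ := mul_nonneg hs0.le hc₁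
      nlinarith
    have hw₂0 : 0 ≤ w₂ := by
      apply div_nonneg _ hDgt.le
      have : 0 ≤ s * c₂ := mul_nonneg hs0.le hc₂
      nlinarith
    have hkey : D2 - ⟪v, t - m⟫ = s * (D2 - ⟪v, q - m⟫) := by
      linear_combination -hgt_id
    have hwsum : w₁ + w₂ = 1 := by
      rw [hw₁def, hw₂def, ← add_div, div_eq_one_iff_eq (ne_of_gt hDgt)]
      rw [hkey, hgq]
      ring_nf
      linear_combination (s * D2) * hsum
    have hw₁σ : w₁ * σ₁ = s * c₁ := by
      rw [hw₁def, hσ₁def]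
      field_simp
    have hw₂σ : w₂ * σ₂ = s * c₂ := by
      rw [hw₂def, hσ₂def]
      field_simp
    have htseg : t ∈ segment ℝ α β := by
      refine ⟨w₁, w₂, hw₁0, hw₂0, hwsum, ?_⟩
      rw [← hts, hαdef, hβdef, hqdef]
      match_scalars
      · linear_combination hwsum - hw₁σ - hw₂σ - (s : ℝ) * hsum
      · linear_combination hw₁σ
      · linear_combination hw₂σ
    rcases bracket_lemma hX hαX hβX htseg with h | h
    · exact h
    · exact absurd (hle t h) (by linarith)

end Main

/-- The core of a Euclidean set: the intersection of the set with the closed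
convex hull of its inner boundary. -/
def core {N : ℕ} (X : Set (EuclideanSpace ℝ (Fin N))) : Set (EuclideanSpace ℝ (Fin N)) :=
  closure (convexHull ℝ (innerBdry X)) ∩ X

set_option maxHeartbeats 1000000 in
/-- For nonconvex closed `X ⊆ ℝ^N`, the metric projection of any `x ∈ X` onto
`cconv(ρX)` lands in `X`: that is, there is a unique point of `cconv(ρX)` closest
to `x`, and it lies in `core(X) = cconv(ρX) ∩ X`. -/
theorem stmt_14 {N : ℕ} (X : Set (EuclideanSpace ℝ (Fin N)))
    (hX : IsClosed X) (hnc : ¬ Convex ℝ X) :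
    ∀ x ∈ X, ∃! p : EuclideanSpace ℝ (Fin N),
      p ∈ core X ∧
      ∀ q ∈ closure (convexHull ℝ (innerBdry X)), dist x p ≤ dist x q := by
  intro x hx
  rw [convex_iff_segment_subset] at hnc
  push_neg at hnc
  obtain ⟨a, ha, b, hb, hsub⟩ := hnc
  obtain ⟨t0, ht0seg, ht0X⟩ := Set.not_subset.mp hsub
  obtain ⟨e₁, e₂, he₁, he₂, -⟩ := gap_lemma hX ha hb ht0seg ht0X
  set K := closure (convexHull ℝ (innerBdry X)) with hKdef
  have hKne : K.Nonempty := ⟨e₁, subset_closure (subset_convexHull ℝ _ he₁)⟩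
  have hKconv : Convex ℝ K := (convex_convexHull ℝ _).closure
  haveI : Nonempty K := hKne.to_subtype
  have hKcl : IsClosed K := isClosed_closure
  obtain ⟨m, hmK, hm⟩ := exists_norm_eq_iInf_of_complete_convex hKne hKcl.isComplete hKconv x
  have hm_inner : ∀ w ∈ K, ⟪x - m, w - m⟫ ≤ 0 :=
    (norm_eq_iInf_iff_real_inner_le_zero hKconv hmK).mp hm
  have hbdd : BddBelow (Set.range fun w : K => ‖x - (w : EuclideanSpace ℝ (Fin N))‖) :=
    ⟨0, Set.forall_mem_range.2 fun _ => norm_nonneg _⟩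
  have hmin : ∀ q ∈ K, dist x m ≤ dist x q := by
    intro q hq
    rw [dist_eq_norm, dist_eq_norm, hm]
    exact ciInf_le hbdd ⟨q, hq⟩
  have hle' : ∀ q ∈ convexHull ℝ (innerBdry X), ⟪x - m, q - m⟫ ≤ 0 :=
    fun q hq => hm_inner q (subset_closure hq)
  have hmX : m ∈ X := by
    by_cases hxm : x = m
    · rwa [hxm] at hx
    rw [← hX.closure_eq, Metric.mem_closure_iff]
    intro ε hε
    set v := x - m with hvdef
    have hv : v ≠ 0 := sub_ne_zero.mpr hxm
    have hD : 0 < ‖v‖ := norm_pos_iff.mpr hv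
    have hD2v : ⟪v, x - m⟫ = ‖v‖ ^ 2 := by
      rw [← hvdef]; exact real_inner_self_eq_norm_sq v
    have hm_cl : m ∈ K := hmK
    rw [hKdef, Metric.mem_closure_iff] at hm_cl
    obtain ⟨q, hqhull, hqm⟩ := hm_cl (ε / 4) (by positivity)
    have hgq : ⟪v, q - m⟫ ≤ 0 := hle' q hqhull
    have hden : 0 < ‖v‖ ^ 2 - ⟪v, q - m⟫ := by nlinarith
    set δ := min (ε * ‖v‖ / 4) (‖v‖ ^ 2) with hδdef
    have hδ : 0 < δ := lt_min (by positivity) (by positivity)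
    have hδle : δ ≤ ‖v‖ ^ 2 := min_le_right _ _
    have hδle' : δ ≤ ε * ‖v‖ / 4 := min_le_left _ _
    set s := (‖v‖ ^ 2 - δ) / (‖v‖ ^ 2 - ⟪v, q - m⟫) with hsdef
    have hs0 : 0 ≤ s := div_nonneg (by linarith) hden.le
    have hs1 : s ≤ 1 := (div_le_one hden).mpr (by linarith)
    set t := x + s • (q - x) with htdef
    have hseg : t ∈ segment ℝ x q := by
      rw [segment_eq_image']
      exact ⟨s, ⟨hs0, hs1⟩, rfl⟩
    have hst : s * (‖v‖ ^ 2 - ⟪v, q - m⟫) = ‖v‖ ^ 2 - δ :=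
      div_mul_cancel₀ _ (ne_of_gt hden)
    have hgt : ⟪v, t - m⟫ = δ := by
      rw [htdef, inner_param, hD2v]
      linear_combination -hst
    have htX : t ∈ X := claimH hX hx hle' q hqhull t hseg (by rw [hgt]; exact hδ)
    refine ⟨t, htX, ?_⟩
    have hvec : t - m = (1 - s) • v + s • (q - m) := by
      rw [htdef, hvdef]
      module
    have hnq0 : 0 ≤ ‖q - m‖ := norm_nonneg _
    have hnqd : ‖q - m‖ = dist m q := by rw [dist_eq_norm, norm_sub_rev]
    have hnq : ‖q - m‖ < ε / 4 := by rw [hnqd]; exact hqm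
    have hCS : -⟪v, q - m⟫ ≤ ‖v‖ * ‖q - m‖ := by
      have h1 := abs_real_inner_le_norm v (q - m)
      have h2 := neg_abs_le (⟪v, q - m⟫)
      linarith
    have h1s : (1 - s) * (‖v‖ ^ 2 - ⟪v, q - m⟫) = δ - ⟪v, q - m⟫ := by
      linear_combination -hst
    have hA : (1 - s) * ‖v‖ ^ 2 ≤ δ + ‖v‖ * ‖q - m‖ := by nlinarith
    have hB : (1 - s) * ‖v‖ ≤ ε / 4 + ‖q - m‖ := by
      have hmul : ‖v‖ * ((1 - s) * ‖v‖) ≤ ‖v‖ * (ε / 4 + ‖q - m‖) := by nlinarith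
      exact le_of_mul_le_mul_left hmul hD
    have hnorm : dist m t < ε := by
      have : ‖t - m‖ ≤ (1 - s) * ‖v‖ + s * ‖q - m‖ := by
        rw [hvec]
        calc ‖(1 - s) • v + s • (q - m)‖ ≤ ‖(1 - s) • v‖ + ‖s • (q - m)‖ := norm_add_le _ _
          _ = (1 - s) * ‖v‖ + s * ‖q - m‖ := by
              rw [norm_smul, norm_smul, Real.norm_eq_abs, Real.norm_eq_abs,
                abs_of_nonneg (by linarith : (0:ℝ) ≤ 1 - s), abs_of_nonneg hs0]
      have hst' : s * ‖q - m‖ ≤ ‖q - m‖ := by nlinarith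
      have : ‖t - m‖ < ε := by linarith
      rw [dist_eq_norm, norm_sub_rev]
      exact this
    exact hnorm
  refine ⟨m, ⟨⟨hmK, hmX⟩, hmin⟩, ?_⟩
  rintro p ⟨⟨hpK, hpX⟩, hpmin⟩
  have hp_norm : ‖x - p‖ = ⨅ w : K, ‖x - (w : EuclideanSpace ℝ (Fin N))‖ := by
    refine le_antisymm (le_ciInf fun w => ?_) (ciInf_le hbdd ⟨p, hpK⟩)
    rw [← dist_eq_norm, ← dist_eq_norm]
    exact hpmin w w.2
  have hp_inner : ∀ w ∈ K, ⟪x - p, w - p⟫ ≤ 0 :=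
    (norm_eq_iInf_iff_real_inner_le_zero hKconv hpK).mp hp_norm
  have h1 : ⟪x - m, p - m⟫ ≤ 0 := hm_inner p hpK
  have h2 : ⟪x - p, m - p⟫ ≤ 0 := hp_inner m hmK
  have e0 : (x - m) - (x - p) = p - m := by abel
  have e1 : ⟪x - m, p - m⟫ - ⟪x - p, p - m⟫ = ⟪p - m, p - m⟫ := by
    rw [← inner_sub_left, e0]
  have e2 : ⟪x - p, p - m⟫ = -⟪x - p, m - p⟫ := by
    rw [← inner_neg_right]
    congr 1
    abel
  have h3 : ⟪p - m, p - m⟫ ≤ 0 := by rw [← e1, e2]; linarith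
  have h4 : ‖p - m‖ ^ 2 ≤ 0 := by rw [← real_inner_self_eq_norm_sq]; exact h3
  have h5 : ‖p - m‖ = 0 :=
    le_antisymm (by nlinarith [norm_nonneg (p - m)]) (norm_nonneg _)
  have h6 : p - m = 0 := norm_eq_zero.mp h5
  exact sub_eq_zero.mp h6
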